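/- The equilibrium point (0,C) of the planar system du/dτ = u(u+C)((u+A)(1-u)(u-M) - Qv), dv/dτ = S(u+A)(u - v + C)v with strong Allee effect is an attractor: the Jacobian at (0,C) has determinant AC²S(AM+QC) > 0 and trace -C(AM+QC+AS) < 0. -/

import Mathlib

open Matrix

/-- Jacobian matrix (via partial derivatives) of the vector field
`F(u,v) = (u(u+C)((u+A)(1-u)(u-M) - Qv), S(u+A)(u-v+C)v)` at the point `(a,b)`. -/
noncomputable def jac (A C M Q S a b : ℝ) : Matrix (Fin 2) (Fin 2) ℝ :=
  !![deriv (fun u => u * (u + C) * ((u + A) * (1 - u) * (u - M) - Q * b)) a,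
     deriv (fun v => a * (a + C) * ((a + A) * (1 - a) * (a - M) - Q * v)) b;
     deriv (fun u => S * (u + A) * (u - b + C) * b) a,
     deriv (fun v => S * (a + A) * (a - v + C) * v) b]

lemma d11 (A C M Q : ℝ) :
    deriv (fun u : ℝ => u * (u + C) * ((u + A) * (1 - u) * (u - M) - Q * C)) 0
      = -C * (A * M + Q * C) := by
  have h : HasDerivAt (fun u : ℝ => u * (u + C) * ((u + A) * (1 - u) * (u - M) - Q * C))
      (-C * (A * M + Q * C)) 0 := by
    have hid := hasDerivAt_id (0:ℝ)
    have h₁ := hid.mul (hid.add_const C)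
    have h₂ := (((hid.add_const A).mul ((hasDerivAt_const (0:ℝ) 1).sub hid)).mul
      (hid.sub_const M)).sub_const (Q * C)
    have h := h₁.mul h₂
    convert h using 1
    · rfl
    · rfl
    · funext u; simp only [Pi.mul_apply, Pi.sub_apply, id]
    · simp; ring
  exact h.deriv

lemma d12 (A C M Q : ℝ) :
    deriv (fun v : ℝ => (0:ℝ) * (0 + C) * ((0 + A) * (1 - 0) * (0 - M) - Q * v)) C = 0 := by
  simp

lemma d21 (A C S : ℝ) :
    deriv (fun u : ℝ => S * (u + A) * (u - C + C) * C) 0 = S * A * C := by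
  have h : HasDerivAt (fun u : ℝ => S * (u + A) * (u - C + C) * C) (S * A * C) 0 := by
    have hid := hasDerivAt_id (0:ℝ)
    have h := ((((hid.add_const A).const_mul S).mul ((hid.sub_const C).add_const C)).mul_const C)
    convert h using 1
    · rfl
    · rfl
    · funext u; simp only [Pi.mul_apply, Pi.sub_apply, id]
    · simp
  exact h.deriv

lemma d22 (A C S : ℝ) :
    deriv (fun v : ℝ => S * (0 + A) * (0 - v + C) * v) C = -(S * A * C) := by
  have h : HasDerivAt (fun v : ℝ => S * (0 + A) * (0 - v + C) * v) (-(S * A * C)) C := by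
    have hid := hasDerivAt_id (C:ℝ)
    have h := ((((hasDerivAt_const C (0:ℝ)).sub hid).add_const C).const_mul (S * (0 + A))).mul hid
    convert h using 1
    · rfl
    · rfl
    · funext u; simp only [Pi.mul_apply, Pi.sub_apply, id]
    · simp
  exact h.deriv

/-- The equilibrium `(0,C)` is an attractor in the strong Allee effect case:
the Jacobian there has determinant `AC²S(AM+QC) > 0` and trace `-C(AM+QC+AS) < 0`. -/
theorem stmt3 (A C M Q S : ℝ) (hA : 0 < A) (hA1 : A < 1) (hC : 0 < C)
    (hS : 0 < S) (hQ : 0 < Q) (hM : 0 < M) (hM1 : M < 1) :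
    (jac A C M Q S 0 C).det = A * C ^ 2 * S * (A * M + Q * C) ∧
    0 < A * C ^ 2 * S * (A * M + Q * C) ∧
    (jac A C M Q S 0 C).trace = -C * (A * M + Q * C + A * S) ∧
    -C * (A * M + Q * C + A * S) < 0 := by
  have e11 := d11 A C M Q
  have e12 := d12 A C M Q
  have e21 := d21 A C S
  have e22 := d22 A C S
  have hdet : (jac A C M Q S 0 C).det = A * C ^ 2 * S * (A * M + Q * C) := by
    rw [jac, Matrix.det_fin_two_of, e11, e12, e21, e22]
    ring
  have htr : (jac A C M Q S 0 C).trace = -C * (A * M + Q * C + A * S) := by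
    rw [jac, Matrix.trace_fin_two_of, e11, e22]
    ring
  refine ⟨hdet, by positivity, htr, ?_⟩
  have : 0 < C * (A * M + Q * C + A * S) := by positivity
  linarith
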